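/- arXiv:1506.00981 — 2 statements merged into one kernel-verified Lean document; each statement's English description precedes it below -/
import Mathlib

section
/- Let ρ be a density matrix, σ a positive semidefinite matrix with supp(ρ) ⊆ supp(σ). Then lim_{α→∞} D̃_α(ρ‖σ) = D_max(ρ‖σ) := log ‖σ^{−1/2} ρ σ^{−1/2}‖_∞, where D̃_α is the sandwiched Rényi relative entropy and σ^{−1/2} is the inverse on the support of σ. -/
open Matrix
open scoped Kronecker ComplexOrder

/-- Power of a Hermitian matrix taken on its support (eigenvalue `0 ↦ 0`). -/
noncomputable def mpow {n : Type*} [Fintype n] [DecidableEq n] (A : Matrix n n ℂ) (r : ℝ) :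
    Matrix n n ℂ :=
  if h : A.IsHermitian then
    (h.eigenvectorUnitary : Matrix n n ℂ) *
      Matrix.diagonal (fun i =>
        (Complex.ofReal (if h.eigenvalues i = 0 then (0 : ℝ) else h.eigenvalues i ^ r))) *
      (star h.eigenvectorUnitary : Matrix n n ℂ)
  else 0

/-- Logarithm of a Hermitian matrix taken on its support. -/
noncomputable def mlog {n : Type*} [Fintype n] [DecidableEq n] (A : Matrix n n ℂ) :
    Matrix n n ℂ :=
  if h : A.IsHermitian then
    (h.eigenvectorUnitary : Matrix n n ℂ) *
      Matrix.diagonal (fun i => (Complex.ofReal (Real.log (h.eigenvalues i)))) *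
      (star h.eigenvectorUnitary : Matrix n n ℂ)
  else 0

/-- Schatten `p`-norm `(Tr |M|^p)^(1/p)`, using `|M|^p = (Mᴴ M)^(p/2)`. -/
noncomputable def schattenNorm {m n : Type*} [Fintype m] [Fintype n] [DecidableEq n]
    (p : ℝ) (M : Matrix m n ℂ) : ℝ :=
  (Matrix.trace (mpow (Mᴴ * M) (p / 2))).re ^ (1 / p)

/-- Operator (spectral) norm: largest singular value. -/
noncomputable def opNorm {m n : Type*} [Fintype m] [Fintype n] [DecidableEq n]
    (M : Matrix m n ℂ) : ℝ :=
  ⨆ i, Real.sqrt ((Matrix.isHermitian_conjTranspose_mul_self M).eigenvalues i)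

/-- Partial trace over the second (environment) tensor factor. -/
noncomputable def ptraceE {B E : Type*} [Fintype E] (M : Matrix (B × E) (B × E) ℂ) :
    Matrix B B ℂ :=
  Matrix.of fun i j => ∑ e, M (i, e) (j, e)


set_option linter.unusedSectionVars false
set_option maxHeartbeats 2000000

namespace Stmt8Aux
variable {n : Type*} [Fintype n] [DecidableEq n]

noncomputable def vn (v : n → ℂ) : ℝ := ∑ i, Complex.normSq (v i)

lemma vn_nonneg (v : n → ℂ) : 0 ≤ vn v :=
  Finset.sum_nonneg fun _ _ => Complex.normSq_nonneg _

lemma vn_dot (v : n → ℂ) : star v ⬝ᵥ v = (vn v : ℂ) := by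
  simp [dotProduct, vn, Complex.normSq_eq_conj_mul_self]

lemma vn_pos {v : n → ℂ} (hv : v ≠ 0) : 0 < vn v := by
  rcases Function.ne_iff.mp hv with ⟨i, hi⟩
  exact Finset.sum_pos' (fun j _ => Complex.normSq_nonneg _)
    ⟨i, Finset.mem_univ i, Complex.normSq_pos.mpr hi⟩

lemma fin_sup_exists [Nonempty n] (g : n → ℝ) :
    ∃ i0, (⨆ i, g i) = g i0 ∧ ∀ i, g i ≤ g i0 := by
  obtain ⟨i0, h⟩ := Finite.exists_max g
  exact ⟨i0, le_antisymm (ciSup_le h) (le_ciSup (Set.finite_range g).bddAbove i0), h⟩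

lemma le_fin_sup [Nonempty n] (g : n → ℝ) (i : n) : g i ≤ ⨆ j, g j :=
  le_ciSup (Set.finite_range g).bddAbove i

lemma fin_sup_eq_of [Nonempty n] (g : n → ℝ) (i0 : n) (h : ∀ i, g i ≤ g i0) :
    (⨆ i, g i) = g i0 :=
  le_antisymm (ciSup_le h) (le_fin_sup g i0)

section rep
variable {U : Matrix n n ℂ} (f : n → ℝ)

lemma rep_qf (v : n → ℂ) :
    (star v ⬝ᵥ (U * Matrix.diagonal (fun i => (f i : ℂ)) * star U) *ᵥ v).re
      = ∑ i, f i * Complex.normSq ((star U *ᵥ v) i) := by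
  set w := star U *ᵥ v with hw
  have h1 : (U * Matrix.diagonal (fun i => (f i : ℂ)) * star U) *ᵥ v
      = U *ᵥ (Matrix.diagonal (fun i => (f i : ℂ)) *ᵥ w) := by
    rw [hw, mulVec_mulVec, mulVec_mulVec, mul_assoc]
  have h2 : star v ᵥ* U = star w := by
    rw [hw, star_mulVec, star_eq_conjTranspose, conjTranspose_conjTranspose]
  rw [h1, dotProduct_mulVec, h2]
  have h3 : star w ⬝ᵥ Matrix.diagonal (fun i => (f i : ℂ)) *ᵥ w
      = ∑ i, ((f i : ℂ) * ((starRingEnd ℂ) (w i) * w i)) := by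
    simp only [dotProduct, mulVec_diagonal, Pi.star_apply, RCLike.star_def]
    refine Finset.sum_congr rfl fun i _ => ?_; ring
  rw [h3, Complex.re_sum]
  refine Finset.sum_congr rfl fun i _ => ?_
  rw [mul_comm ((starRingEnd ℂ) (w i)) (w i), Complex.mul_conj, ← Complex.ofReal_mul,
    Complex.ofReal_re]

lemma rep_vn (hU2 : U * star U = 1) (v : n → ℂ) :
    ∑ i, Complex.normSq ((star U *ᵥ v) i) = vn v := by
  have h2 : star v ᵥ* U = star (star U *ᵥ v) := by
    rw [star_mulVec, star_eq_conjTranspose, conjTranspose_conjTranspose]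
  have : star (star U *ᵥ v) ⬝ᵥ (star U *ᵥ v) = star v ⬝ᵥ v := by
    rw [← h2, ← dotProduct_mulVec, mulVec_mulVec, hU2, one_mulVec]
  have := congrArg Complex.re ((vn_dot _).symm.trans (this.trans (vn_dot v)))
  simpa [vn] using this


/-- quadratic form evaluated at an eigenvector -/
lemma qf_eigen {A : Matrix n n ℂ} {u : n → ℂ} {t : ℝ} (hu : A *ᵥ u = (t : ℂ) • u) :
    (star u ⬝ᵥ A *ᵥ u).re = t * vn u := by
  rw [hu, dotProduct_smul, vn_dot, smul_eq_mul, ← Complex.ofReal_mul, Complex.ofReal_re]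

/-- any eigenvalue of `U D U*` is at most the sup of the diagonal -/
lemma eig_le_sup [Nonempty n] (hU2 : U * star U = 1)
    {A : Matrix n n ℂ} (hrep : A = U * Matrix.diagonal (fun i => (f i : ℂ)) * star U)
    {u : n → ℂ} {t : ℝ} (hu : A *ᵥ u = (t : ℂ) • u) (hu0 : u ≠ 0) :
    t ≤ ⨆ i, f i := by
  have h1 : (star u ⬝ᵥ A *ᵥ u).re = t * vn u := qf_eigen hu
  have h2 : (star u ⬝ᵥ A *ᵥ u).re ≤ (⨆ i, f i) * vn u := by
    rw [hrep, rep_qf]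
    calc ∑ i, f i * Complex.normSq ((star U *ᵥ u) i)
        ≤ ∑ i, (⨆ j, f j) * Complex.normSq ((star U *ᵥ u) i) :=
          Finset.sum_le_sum fun i _ =>
            mul_le_mul_of_nonneg_right (le_fin_sup f i) (Complex.normSq_nonneg _)
      _ = (⨆ j, f j) * vn u := by rw [← Finset.mul_sum, rep_vn hU2]
  have h3 : (0:ℝ) < vn u := vn_pos hu0
  have := h1 ▸ h2
  exact le_of_mul_le_mul_right this h3

/-- general quadratic form bound -/
lemma qf_le_sup [Nonempty n] (hU2 : U * star U = 1)
    {A : Matrix n n ℂ} (hrep : A = U * Matrix.diagonal (fun i => (f i : ℂ)) * star U)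
    (v : n → ℂ) : (star v ⬝ᵥ A *ᵥ v).re ≤ (⨆ i, f i) * vn v := by
  rw [hrep, rep_qf]
  calc ∑ i, f i * Complex.normSq ((star U *ᵥ v) i)
      ≤ ∑ i, (⨆ j, f j) * Complex.normSq ((star U *ᵥ v) i) :=
        Finset.sum_le_sum fun i _ =>
          mul_le_mul_of_nonneg_right (le_fin_sup f i) (Complex.normSq_nonneg _)
    _ = (⨆ j, f j) * vn v := by rw [← Finset.mul_sum, rep_vn hU2]

/-- columns of `U` are eigenvectors of `U D U*` -/
lemma col_eigen (hU1 : star U * U = 1)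
    {A : Matrix n n ℂ} (hrep : A = U * Matrix.diagonal (fun i => (f i : ℂ)) * star U)
    (j : n) : A *ᵥ (fun i => U i j) = (f j : ℂ) • (fun i => U i j) := by
  have hcol : (fun i => U i j) = U *ᵥ Pi.single j 1 := by
    funext i; simp [mulVec_single]
  have key : (U * Matrix.diagonal (fun i => (f i : ℂ)) * star U) * U
      = U * Matrix.diagonal (fun i => (f i : ℂ)) := by
    rw [mul_assoc, hU1, mul_one]
  rw [hcol, hrep, mulVec_mulVec, key, ← mulVec_mulVec, diagonal_mulVec_single]
  funext k
  simp [mulVec, dotProduct, Pi.single_apply, Finset.sum_ite_eq', mul_comm]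

lemma col_vn (hU1 : star U * U = 1) (j : n) : vn (fun i => U i j) = 1 := by
  have h1 : (star U * U) j j = (1 : Matrix n n ℂ) j j := by rw [hU1]
  have h2 : (star U * U) j j = ((vn fun i => U i j : ℝ) : ℂ) := by
    simp only [mul_apply, star_apply, RCLike.star_def, vn, Complex.ofReal_sum]
    refine Finset.sum_congr rfl fun i _ => ?_
    rw [← Complex.normSq_eq_conj_mul_self]
  rw [h2, one_apply_eq] at h1
  exact_mod_cast h1

lemma col_ne_zero (hU1 : star U * U = 1) (j : n) : (fun i => U i j) ≠ 0 := by
  intro h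
  have := col_vn hU1 j
  rw [h] at this
  simp [vn] at this

end rep

section lmax
variable {A X : Matrix n n ℂ}

lemma herm_rep (hA : A.IsHermitian) :
    A = (hA.eigenvectorUnitary : Matrix n n ℂ) *
      Matrix.diagonal (fun i => ((hA.eigenvalues i : ℝ) : ℂ)) *
      star (hA.eigenvectorUnitary : Matrix n n ℂ) :=
  hA.spectral_theorem

lemma herm_hU1 (hA : A.IsHermitian) :
    star (hA.eigenvectorUnitary : Matrix n n ℂ) * (hA.eigenvectorUnitary : Matrix n n ℂ) = 1 :=
  Unitary.coe_star_mul_self hA.eigenvectorUnitary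

lemma herm_hU2 (hA : A.IsHermitian) :
    (hA.eigenvectorUnitary : Matrix n n ℂ) * star (hA.eigenvectorUnitary : Matrix n n ℂ) = 1 :=
  Unitary.coe_mul_star_self hA.eigenvectorUnitary

lemma lmax_eig_le [Nonempty n] (hA : A.IsHermitian) {u : n → ℂ} {t : ℝ}
    (hu : A *ᵥ u = (t : ℂ) • u) (hu0 : u ≠ 0) : t ≤ ⨆ i, hA.eigenvalues i :=
  eig_le_sup _ (herm_hU2 hA) (herm_rep hA) hu hu0

lemma lmax_qf_le [Nonempty n] (hA : A.IsHermitian) (v : n → ℂ) :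
    (star v ⬝ᵥ A *ᵥ v).re ≤ (⨆ i, hA.eigenvalues i) * vn v :=
  qf_le_sup _ (herm_hU2 hA) (herm_rep hA) v

lemma lmax_exists_eigen [Nonempty n] (hA : A.IsHermitian) :
    ∃ u : n → ℂ, A *ᵥ u = ((⨆ i, hA.eigenvalues i : ℝ) : ℂ) • u ∧ vn u = 1 ∧ u ≠ 0 := by
  obtain ⟨i0, h0, _⟩ := fin_sup_exists hA.eigenvalues
  refine ⟨fun i => (hA.eigenvectorUnitary : Matrix n n ℂ) i i0, ?_, ?_, ?_⟩
  · rw [h0]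
    exact col_eigen _ (herm_hU1 hA) (herm_rep hA) i0
  · exact col_vn (herm_hU1 hA) i0
  · exact col_ne_zero (herm_hU1 hA) i0

lemma lmax_congr {B : Matrix n n ℂ} (h : A = B) (hA : A.IsHermitian) (hB : B.IsHermitian) :
    (⨆ i, hA.eigenvalues i) = ⨆ i, hB.eigenvalues i := by
  subst h; rfl

lemma lmax_nonneg [Nonempty n] (hA : A.PosSemidef) :
    0 ≤ ⨆ i, hA.1.eigenvalues i :=
  le_trans (hA.eigenvalues_nonneg (Classical.arbitrary n)) (le_fin_sup _ _)

/-- `sup spec (BᴴB) ≤ sup spec (BBᴴ)` -/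
lemma lmax_swap_le [Nonempty n] (B : Matrix n n ℂ) :
    (⨆ i, (posSemidef_conjTranspose_mul_self B).1.eigenvalues i)
      ≤ ⨆ i, (posSemidef_self_mul_conjTranspose B).1.eigenvalues i := by
  obtain ⟨u, hu, hvn, hu0⟩ := lmax_exists_eigen (posSemidef_conjTranspose_mul_self B).1
  set t := ⨆ i, (posSemidef_conjTranspose_mul_self B).1.eigenvalues i with ht
  rcases eq_or_ne t 0 with h0 | h0
  · rw [h0]; exact lmax_nonneg (posSemidef_self_mul_conjTranspose B)
  · have hw : (B * Bᴴ) *ᵥ (B *ᵥ u) = (t : ℂ) • (B *ᵥ u) := by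
      rw [mulVec_mulVec, mul_assoc, ← mulVec_mulVec, hu, mulVec_smul]
    have hw0 : B *ᵥ u ≠ 0 := by
      intro h
      have : (Bᴴ * B) *ᵥ u = 0 := by rw [← mulVec_mulVec, h, mulVec_zero]
      rw [hu] at this
      rcases smul_eq_zero.mp this with h1 | h1
      · exact h0 (by exact_mod_cast h1)
      · exact hu0 h1
    exact lmax_eig_le (posSemidef_self_mul_conjTranspose B).1 hw hw0

lemma lmax_swap [Nonempty n] (B : Matrix n n ℂ) :
    (⨆ i, (posSemidef_conjTranspose_mul_self B).1.eigenvalues i)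
      = ⨆ i, (posSemidef_self_mul_conjTranspose B).1.eigenvalues i := by
  refine le_antisymm (lmax_swap_le B) ?_
  have h := lmax_swap_le Bᴴ
  have e1 : (⨆ i, (posSemidef_conjTranspose_mul_self Bᴴ).1.eigenvalues i)
      = ⨆ i, (posSemidef_self_mul_conjTranspose B).1.eigenvalues i :=
    lmax_congr (by rw [conjTranspose_conjTranspose]) _ _
  have e2 : (⨆ i, (posSemidef_self_mul_conjTranspose Bᴴ).1.eigenvalues i)
      = ⨆ i, (posSemidef_conjTranspose_mul_self B).1.eigenvalues i :=
    lmax_congr (by rw [conjTranspose_conjTranspose]) _ _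
  linarith


lemma qf_smul (X : Matrix n n ℂ) (s : ℝ) (u : n → ℂ) :
    (star u ⬝ᵥ ((s : ℂ) • X) *ᵥ u).re = s * (star u ⬝ᵥ X *ᵥ u).re := by
  rw [smul_mulVec, dotProduct_smul]
  simp [Complex.smul_re]

lemma qf_psd_nonneg {M : Matrix n n ℂ} (hM : M.PosSemidef) (u : n → ℂ) :
    0 ≤ (star u ⬝ᵥ M *ᵥ u).re :=
  hM.re_dotProduct_nonneg u

lemma qf_sub (A B : Matrix n n ℂ) (u : n → ℂ) :
    (star u ⬝ᵥ (A - B) *ᵥ u).re = (star u ⬝ᵥ A *ᵥ u).re - (star u ⬝ᵥ B *ᵥ u).re := by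
  rw [sub_mulVec, dotProduct_sub, Complex.sub_re]

lemma smul_le_lmax [Nonempty n] {A X : Matrix n n ℂ} (hA : A.IsHermitian) (hX : X.IsHermitian)
    {s : ℝ} (hP : (A - (s : ℂ) • X).PosSemidef) :
    s * (⨆ i, hX.eigenvalues i) ≤ ⨆ i, hA.eigenvalues i := by
  obtain ⟨u, hu, hvn, hu0⟩ := lmax_exists_eigen hX
  have e1 : (star u ⬝ᵥ ((s : ℂ) • X) *ᵥ u).re = s * (⨆ i, hX.eigenvalues i) := by
    rw [qf_smul, qf_eigen hu, hvn, mul_one]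
  have e2 : (star u ⬝ᵥ ((s : ℂ) • X) *ᵥ u).re ≤ (star u ⬝ᵥ A *ᵥ u).re := by
    have := qf_psd_nonneg hP u
    rw [qf_sub] at this
    linarith
  have e3 : (star u ⬝ᵥ A *ᵥ u).re ≤ ⨆ i, hA.eigenvalues i := by
    have := lmax_qf_le hA u
    rwa [hvn, mul_one] at this
  linarith

lemma lmax_le_smul [Nonempty n] {A X : Matrix n n ℂ} (hA : A.IsHermitian) (hX : X.IsHermitian)
    {s : ℝ} (hs : 0 ≤ s) (hP : ((s : ℂ) • X - A).PosSemidef) :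
    (⨆ i, hA.eigenvalues i) ≤ s * ⨆ i, hX.eigenvalues i := by
  obtain ⟨u, hu, hvn, hu0⟩ := lmax_exists_eigen hA
  have e1 : (⨆ i, hA.eigenvalues i) = (star u ⬝ᵥ A *ᵥ u).re := by
    rw [qf_eigen hu, hvn, mul_one]
  have e2 : (star u ⬝ᵥ A *ᵥ u).re ≤ (star u ⬝ᵥ ((s : ℂ) • X) *ᵥ u).re := by
    have := qf_psd_nonneg hP u
    rw [qf_sub] at this
    linarith
  have e3 : (star u ⬝ᵥ ((s : ℂ) • X) *ᵥ u).re ≤ s * ⨆ i, hX.eigenvalues i := by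
    rw [qf_smul]
    have := lmax_qf_le hX u
    rw [hvn, mul_one] at this
    exact mul_le_mul_of_nonneg_left this hs
  linarith

end lmax

section mpowsec
variable {A : Matrix n n ℂ}

/-- the eigenvalue function used by `mpow` -/
noncomputable def fp (hA : A.IsHermitian) (r : ℝ) (i : n) : ℝ :=
  if hA.eigenvalues i = 0 then 0 else hA.eigenvalues i ^ r

lemma mpow_rep (hA : A.IsHermitian) (r : ℝ) :
    mpow A r = (hA.eigenvectorUnitary : Matrix n n ℂ) *
      Matrix.diagonal (fun i => ((fp hA r i : ℝ) : ℂ)) *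
      star (hA.eigenvectorUnitary : Matrix n n ℂ) := by
  rw [mpow, dif_pos hA]; rfl

lemma rep_mul {U : Matrix n n ℂ} (hU1 : star U * U = 1) (f g : n → ℝ) :
    (U * Matrix.diagonal (fun i => ((f i : ℝ) : ℂ)) * star U) *
      (U * Matrix.diagonal (fun i => ((g i : ℝ) : ℂ)) * star U)
    = U * Matrix.diagonal (fun i => ((f i * g i : ℝ) : ℂ)) * star U := by
  have : Matrix.diagonal (fun i => ((f i : ℝ) : ℂ)) * Matrix.diagonal (fun i => ((g i : ℝ) : ℂ))
      = Matrix.diagonal (fun i => ((f i * g i : ℝ) : ℂ)) := by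
    rw [diagonal_mul_diagonal]
    congr 1; funext i; push_cast; ring
  calc (U * Matrix.diagonal (fun i => ((f i : ℝ) : ℂ)) * star U) *
      (U * Matrix.diagonal (fun i => ((g i : ℝ) : ℂ)) * star U)
      = U * (Matrix.diagonal (fun i => ((f i : ℝ) : ℂ)) * ((star U * U) *
          Matrix.diagonal (fun i => ((g i : ℝ) : ℂ)))) * star U := by
        simp only [mul_assoc]
    _ = U * Matrix.diagonal (fun i => ((f i * g i : ℝ) : ℂ)) * star U := by
        rw [hU1, one_mul, this, mul_assoc]

lemma mpow_mul_mpow (hA : A.PosSemidef) (r s : ℝ) :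
    mpow A r * mpow A s = mpow A (r + s) := by
  rw [mpow_rep hA.1 r, mpow_rep hA.1 s, mpow_rep hA.1 (r + s), rep_mul (herm_hU1 hA.1)]
  have : (fun i => ((fp hA.1 r i * fp hA.1 s i : ℝ) : ℂ))
      = fun i => ((fp hA.1 (r + s) i : ℝ) : ℂ) := by
    funext i
    unfold fp
    by_cases h : hA.1.eigenvalues i = 0
    · simp [h]
    · have hpos : 0 < hA.1.eigenvalues i := lt_of_le_of_ne (hA.eigenvalues_nonneg i) (Ne.symm h)
      simp only [h, if_false]
      rw [← Real.rpow_add hpos]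
  rw [this]

lemma mpow_one (hA : A.IsHermitian) : mpow A 1 = A := by
  rw [mpow_rep hA 1]
  have : (fun i => ((fp hA 1 i : ℝ) : ℂ)) = fun i => ((hA.eigenvalues i : ℝ) : ℂ) := by
    funext i
    unfold fp
    by_cases h : hA.eigenvalues i = 0 <;> simp [h, Real.rpow_one]
  rw [this]
  exact (herm_rep hA).symm

lemma mpow_posSemidef (hA : A.PosSemidef) (r : ℝ) : (mpow A r).PosSemidef := by
  rw [mpow_rep hA.1 r]
  have hd : (Matrix.diagonal (fun i => ((fp hA.1 r i : ℝ) : ℂ))).PosSemidef := by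
    rw [posSemidef_diagonal_iff]
    intro i
    rw [Complex.zero_le_real]
    unfold fp
    by_cases h : hA.1.eigenvalues i = 0
    · simp [h]
    · simp only [h, if_false]
      exact Real.rpow_nonneg (hA.eigenvalues_nonneg i) r
  have := hd.mul_mul_conjTranspose_same (hA.1.eigenvectorUnitary : Matrix n n ℂ)
  rwa [← star_eq_conjTranspose] at this

lemma trace_mpow_re (hA : A.IsHermitian) (r : ℝ) :
    (Matrix.trace (mpow A r)).re = ∑ i, fp hA r i := by
  rw [mpow_rep hA r, Matrix.trace_mul_cycle, herm_hU1 hA, one_mul, Matrix.trace_diagonal]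
  rw [← Complex.ofReal_sum, Complex.ofReal_re]


lemma rep_lmax [Nonempty n] (hA : A.IsHermitian) {U : Matrix n n ℂ} {f : n → ℝ}
    (hU1 : star U * U = 1) (hU2 : U * star U = 1)
    (hrep : A = U * Matrix.diagonal (fun i => ((f i : ℝ) : ℂ)) * star U) :
    (⨆ i, hA.eigenvalues i) = ⨆ i, f i := by
  refine le_antisymm ?_ ?_
  · obtain ⟨u, hu, hvn, hu0⟩ := lmax_exists_eigen hA
    exact eig_le_sup f hU2 hrep hu hu0
  · obtain ⟨j0, hj0, _⟩ := fin_sup_exists f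
    rw [hj0]
    exact lmax_eig_le hA (col_eigen f hU1 hrep j0) (col_ne_zero hU1 j0)

lemma rep_posSemidef {U : Matrix n n ℂ} {f : n → ℝ} (hf : ∀ i, 0 ≤ f i) :
    (U * Matrix.diagonal (fun i => ((f i : ℝ) : ℂ)) * star U).PosSemidef := by
  have hd : (Matrix.diagonal (fun i => ((f i : ℝ) : ℂ))).PosSemidef := by
    rw [posSemidef_diagonal_iff]
    intro i
    rw [Complex.zero_le_real]
    exact hf i
  have := hd.mul_mul_conjTranspose_same U
  rwa [← star_eq_conjTranspose] at this

lemma rep_sub_smul {U : Matrix n n ℂ} (f g : n → ℝ) (s : ℝ) :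
    U * Matrix.diagonal (fun i => ((f i : ℝ) : ℂ)) * star U -
      (s : ℂ) • (U * Matrix.diagonal (fun i => ((g i : ℝ) : ℂ)) * star U)
    = U * Matrix.diagonal (fun i => ((f i - s * g i : ℝ) : ℂ)) * star U := by
  have h1 : (s : ℂ) • (U * Matrix.diagonal (fun i => ((g i : ℝ) : ℂ)) * star U)
      = U * ((s : ℂ) • Matrix.diagonal (fun i => ((g i : ℝ) : ℂ))) * star U := by
    rw [← smul_mul_assoc, ← mul_smul_comm]
  have h2 : ((Matrix.diagonal fun i => ((f i : ℝ) : ℂ)) - (s:ℂ) • Matrix.diagonal fun i => ((g i : ℝ) : ℂ))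
      = Matrix.diagonal fun i => ((f i - s * g i : ℝ) : ℂ) := by
    ext i j
    by_cases h : i = j <;> simp [Matrix.diagonal_apply, h] <;> push_cast <;> ring
  rw [h1, ← sub_mul, ← mul_sub, h2]


lemma rep_smul_sub {U : Matrix n n ℂ} (f g : n → ℝ) (s : ℝ) :
    (s : ℂ) • (U * Matrix.diagonal (fun i => ((g i : ℝ) : ℂ)) * star U) -
      U * Matrix.diagonal (fun i => ((f i : ℝ) : ℂ)) * star U
    = U * Matrix.diagonal (fun i => ((s * g i - f i : ℝ) : ℂ)) * star U := by
  have h1 : (s : ℂ) • (U * Matrix.diagonal (fun i => ((g i : ℝ) : ℂ)) * star U)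
      = U * ((s : ℂ) • Matrix.diagonal (fun i => ((g i : ℝ) : ℂ))) * star U := by
    rw [← smul_mul_assoc, ← mul_smul_comm]
  have h2 : ((s:ℂ) • (Matrix.diagonal fun i => ((g i : ℝ) : ℂ)) - Matrix.diagonal fun i => ((f i : ℝ) : ℂ))
      = Matrix.diagonal fun i => ((s * g i - f i : ℝ) : ℂ) := by
    ext i j
    by_cases h : i = j <;> simp [Matrix.diagonal_apply, h] <;> push_cast <;> ring
  rw [h1, ← sub_mul, ← mul_sub, h2]

end mpowsec
end Stmt8Aux

set_option maxHeartbeats 8000000 in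
open Stmt8Aux in
/-- the sandwiched Rényi relative entropy converges to the max-relative entropy
as α → ∞. -/
theorem stmt_8 {n : Type*} [Fintype n] [DecidableEq n] (ρ σ : Matrix n n ℂ)
    (hρ : ρ.PosSemidef) (hρ1 : ρ.trace = 1) (hσ : σ.PosSemidef)
    (hsupp : ∀ v, σ.mulVec v = 0 → ρ.mulVec v = 0) :
    Filter.Tendsto (fun α : ℝ => (α - 1)⁻¹ *
        Real.log (Matrix.trace (mpow (mpow σ ((1 - α) / (2 * α)) * ρ *
          mpow σ ((1 - α) / (2 * α))) α)).re)
      Filter.atTop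
      (nhds (Real.log (opNorm (mpow σ (-(1 / 2)) * ρ * mpow σ (-(1 / 2)))))) := by
  classical
  have hne : Nonempty n := by
    by_contra h
    rw [not_nonempty_iff] at h
    rw [Matrix.trace, Finset.univ_eq_empty, Finset.sum_empty] at hρ1
    exact zero_ne_one hρ1
  -- basic hermitian facts
  have hmh : ∀ r : ℝ, (mpow σ r)ᴴ = mpow σ r := fun r => (mpow_posSemidef hσ r).1
  set X : Matrix n n ℂ := mpow σ (-(1 / 2)) * ρ * mpow σ (-(1 / 2)) with hXdef
  have hXpsd : X.PosSemidef := by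
    have := hρ.mul_mul_conjTranspose_same (mpow σ (-(1 / 2)))
    rwa [hmh] at this
  -- support projection facts
  have hsP : σ * mpow σ 0 = σ := by
    have h := mpow_mul_mpow hσ 1 0
    rw [add_zero, mpow_one hσ.1] at h
    exact h
  have hrhoP : ρ * mpow σ 0 = ρ := by
    have hz : ρ * (1 - mpow σ 0) = 0 := by
      have hσz : σ * (1 - mpow σ 0) = 0 := by
        rw [mul_sub, mul_one, hsP, sub_self]
      have hv : ∀ v : n → ℂ, (ρ * (1 - mpow σ 0)) *ᵥ v = 0 := by
        intro v
        rw [← mulVec_mulVec]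
        apply hsupp
        rw [mulVec_mulVec, hσz, zero_mulVec]
      ext i j
      have := congrFun (hv (Pi.single j 1)) i
      simpa [mulVec_single] using this
    rw [mul_sub, mul_one] at hz
    rw [sub_eq_zero] at hz
    exact hz.symm
  have hPrho : mpow σ 0 * ρ = ρ := by
    have := congrArg Matrix.conjTranspose hrhoP
    rwa [Matrix.conjTranspose_mul, hmh 0, hρ.1.eq] at this
  -- X12 and support facts
  have hX12sq : mpow X (1/2) * mpow X (1/2) = X := by
    have h := mpow_mul_mpow hXpsd (1/2) (1/2)
    norm_num at h
    rw [mpow_one hXpsd.1] at h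
    exact h
  have hPX : mpow σ 0 * X = X := by
    have h : mpow σ 0 * mpow σ (-(1/2)) = mpow σ (-(1/2)) := by
      rw [mpow_mul_mpow hσ, zero_add]
    rw [hXdef, ← mul_assoc, ← mul_assoc, h]
  have hXP : X * mpow σ 0 = X := by
    have h : mpow σ (-(1/2)) * mpow σ 0 = mpow σ (-(1/2)) := by
      rw [mpow_mul_mpow hσ, add_zero]
    rw [hXdef, mul_assoc, h]
  have hX12h : (mpow X (1/2))ᴴ = mpow X (1/2) := (mpow_posSemidef hXpsd (1/2)).1
  have hPX12 : mpow σ 0 * mpow X (1/2) = mpow X (1/2) := by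
    have hzz : ((1 - mpow σ 0) * mpow X (1/2)) * ((1 - mpow σ 0) * mpow X (1/2))ᴴ = 0 := by
      have h1P : (1 - mpow σ 0)ᴴ = 1 - mpow σ 0 := by
        rw [Matrix.conjTranspose_sub, Matrix.conjTranspose_one, hmh 0]
      rw [Matrix.conjTranspose_mul, h1P, hX12h, mul_assoc, ← mul_assoc (mpow X (1/2)), hX12sq]
      have : (1 - mpow σ 0) * X = 0 := by
        rw [sub_mul, one_mul, hPX, sub_self]
      rw [← mul_assoc, this, zero_mul]
    have hz : ((1 - mpow σ 0) * mpow X (1/2))ᴴ = 0 := by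
      apply Matrix.conjTranspose_mul_self_eq_zero.mp
      rwa [Matrix.conjTranspose_conjTranspose]
    have hz2 : (1 - mpow σ 0) * mpow X (1/2) = 0 := Matrix.conjTranspose_eq_zero.mp hz
    rw [sub_mul, one_mul, sub_eq_zero] at hz2
    exact hz2.symm
  have hX12P : mpow X (1/2) * mpow σ 0 = mpow X (1/2) := by
    have := congrArg Matrix.conjTranspose hPX12
    rwa [Matrix.conjTranspose_mul, hX12h, hmh 0] at this
  have hX12PX12 : mpow X (1/2) * mpow σ 0 * mpow X (1/2) = X := by
    rw [hX12P, hX12sq]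
  -- recovering ρ
  have hrho_back : mpow σ (1/2) * X * mpow σ (1/2) = ρ := by
    have h1 : mpow σ (1/2) * mpow σ (-(1/2)) = mpow σ 0 := by
      rw [mpow_mul_mpow hσ]; norm_num
    have h2 : mpow σ (-(1/2)) * mpow σ (1/2) = mpow σ 0 := by
      rw [mpow_mul_mpow hσ]; norm_num
    calc mpow σ (1/2) * (mpow σ (-(1/2)) * ρ * mpow σ (-(1/2))) * mpow σ (1/2)
        = (mpow σ (1/2) * mpow σ (-(1/2))) * ρ * (mpow σ (-(1/2)) * mpow σ (1/2)) := by
          simp only [← mul_assoc]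
      _ = ρ := by rw [h1, h2, hPrho, hrhoP]
  -- lam
  set lam : ℝ := ⨆ i, hXpsd.1.eigenvalues i with hlam
  have hlam_nonneg : 0 ≤ lam := lmax_nonneg hXpsd
  have hlam_pos : 0 < lam := by
    rcases lt_or_eq_of_le hlam_nonneg with h | h
    · exact h
    · exfalso
      have hev : ∀ i, hXpsd.1.eigenvalues i = 0 := by
        intro i
        exact le_antisymm (h ▸ le_fin_sup _ i) (hXpsd.eigenvalues_nonneg i)
      have hX0 : X = 0 := by
        have hr := herm_rep hXpsd.1
        have : (fun i => ((hXpsd.1.eigenvalues i : ℝ) : ℂ)) = fun _ => 0 := by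
          funext i; rw [hev i]; norm_num
        rw [this] at hr
        simpa using hr
      have : ρ = 0 := by rw [← hrho_back, hX0, mul_zero, zero_mul]
      rw [this, Matrix.trace_zero] at hρ1
      exact zero_ne_one hρ1
  -- smin / smax
  have hSne : (Finset.univ.filter (fun i => hσ.1.eigenvalues i ≠ 0)).Nonempty := by
    by_contra h
    rw [Finset.not_nonempty_iff_eq_empty, Finset.filter_eq_empty_iff] at h
    have hev : ∀ i, hσ.1.eigenvalues i = 0 := by
      intro i
      by_contra hi
      exact (h (Finset.mem_univ i)) hi
    have hP0 : mpow σ 0 = 0 := by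
      rw [mpow_rep hσ.1 0]
      have : (fun i => ((fp hσ.1 0 i : ℝ) : ℂ)) = fun _ => 0 := by
        funext i; unfold fp; rw [if_pos (hev i)]; norm_num
      rw [this]
      simp
    have : ρ = 0 := by rw [← hrhoP, hP0, mul_zero]
    rw [this, Matrix.trace_zero] at hρ1
    exact zero_ne_one hρ1
  obtain ⟨imin, himin, hminle⟩ := Finset.exists_min_image _ hσ.1.eigenvalues hSne
  obtain ⟨imax, himax, hmaxle⟩ := Finset.exists_max_image _ hσ.1.eigenvalues hSne
  set smin : ℝ := hσ.1.eigenvalues imin with hsmin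
  set smax : ℝ := hσ.1.eigenvalues imax with hsmax
  have hsmin_pos : 0 < smin :=
    lt_of_le_of_ne (hσ.eigenvalues_nonneg imin) (Ne.symm (Finset.mem_filter.mp himin).2)
  have hsmax_pos : 0 < smax :=
    lt_of_le_of_ne (hσ.eigenvalues_nonneg imax) (Ne.symm (Finset.mem_filter.mp himax).2)
  have hbound : ∀ i, hσ.1.eigenvalues i ≠ 0 →
      smin ≤ hσ.1.eigenvalues i ∧ hσ.1.eigenvalues i ≤ smax := by
    intro i hi
    have hmem : i ∈ Finset.univ.filter (fun i => hσ.1.eigenvalues i ≠ 0) :=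
      Finset.mem_filter.mpr ⟨Finset.mem_univ i, hi⟩
    exact ⟨hminle i hmem, hmaxle i hmem⟩
  -- opNorm X = lam
  have hXX2 : Xᴴ * X = mpow X 2 := by
    have h2 : mpow X 1 * mpow X 1 = mpow X 2 := by
      rw [mpow_mul_mpow hXpsd]; norm_num
    rw [hXpsd.1.eq, ← h2, mpow_one hXpsd.1]
  have hsup2 : (⨆ i, (Matrix.isHermitian_conjTranspose_mul_self X).eigenvalues i) = lam ^ 2 := by
    have h1 : (⨆ i, (Matrix.isHermitian_conjTranspose_mul_self X).eigenvalues i)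
        = ⨆ i, fp hXpsd.1 2 i := by
      apply rep_lmax _ (herm_hU1 hXpsd.1) (herm_hU2 hXpsd.1)
      rw [hXX2, mpow_rep hXpsd.1 2]
    obtain ⟨i0, hi0, hmax⟩ := fin_sup_exists hXpsd.1.eigenvalues
    have hi0lam : hXpsd.1.eigenvalues i0 = lam := by rw [hlam, hi0]
    have hi0ne : hXpsd.1.eigenvalues i0 ≠ 0 := by rw [hi0lam]; exact ne_of_gt hlam_pos
    have h2 : (⨆ i, fp hXpsd.1 2 i) = lam ^ 2 := by
      have hle : ∀ i, fp hXpsd.1 2 i ≤ fp hXpsd.1 2 i0 := by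
        intro i
        unfold fp
        rw [if_neg hi0ne]
        by_cases h : hXpsd.1.eigenvalues i = 0
        · rw [if_pos h]
          exact Real.rpow_nonneg (hXpsd.eigenvalues_nonneg i0) 2
        · rw [if_neg h]
          exact Real.rpow_le_rpow (hXpsd.eigenvalues_nonneg i) (hmax i) (by norm_num)
      rw [fin_sup_eq_of _ i0 hle]
      unfold fp
      rw [if_neg hi0ne, hi0lam, Real.rpow_two]
    rw [h1, h2]
  have hop : opNorm X = lam := by
    rw [opNorm]
    obtain ⟨j0, hj0, hmaxj⟩ := fin_sup_exists (Matrix.isHermitian_conjTranspose_mul_self X).eigenvalues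
    have hle : ∀ i, Real.sqrt ((Matrix.isHermitian_conjTranspose_mul_self X).eigenvalues i)
        ≤ Real.sqrt ((Matrix.isHermitian_conjTranspose_mul_self X).eigenvalues j0) :=
      fun i => Real.sqrt_le_sqrt (hmaxj i)
    rw [fin_sup_eq_of _ j0 hle, ← hj0, hsup2, Real.sqrt_sq hlam_nonneg]
  rw [hop]
  have key : ∀ C : ℝ, Filter.Tendsto (fun α : ℝ => (α - 1)⁻¹ * (C + α * Real.log lam))
      Filter.atTop (nhds (Real.log lam)) := by
    intro C
    have h2 : Filter.Tendsto (fun α : ℝ => (α - 1)⁻¹) Filter.atTop (nhds 0) := by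
      apply Filter.Tendsto.inv_tendsto_atTop
      exact Filter.tendsto_atTop_add_const_right _ (-1) Filter.tendsto_id
    have h1 := (h2.const_mul (C + Real.log lam)).add_const (Real.log lam)
    rw [mul_zero, zero_add] at h1
    apply h1.congr'
    filter_upwards [Filter.eventually_gt_atTop (1:ℝ)] with α hα
    have hne1 : α - 1 ≠ 0 := ne_of_gt (by linarith)
    field_simp
    ring
  have hev : ∀ᶠ α : ℝ in Filter.atTop,
      ((α - 1)⁻¹ * (Real.log smin + α * Real.log lam) ≤
        (α - 1)⁻¹ * Real.log (Matrix.trace (mpow (mpow σ ((1 - α) / (2 * α)) * ρ *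
          mpow σ ((1 - α) / (2 * α))) α)).re ∧
      (α - 1)⁻¹ * Real.log (Matrix.trace (mpow (mpow σ ((1 - α) / (2 * α)) * ρ *
          mpow σ ((1 - α) / (2 * α))) α)).re ≤
        (α - 1)⁻¹ * (Real.log ((Fintype.card n : ℝ) * smax) + α * Real.log lam)) := by
    filter_upwards [Filter.eventually_gt_atTop (1:ℝ)] with α hα
    have hα0 : 0 < α := by linarith
    set d : ℝ := 1/(2*α) with hd
    have hd_pos : 0 < d := by rw [hd]; positivity
    have hdd_pos : 0 < d + d := by linarith
    have e1 : d + -(1/2) = (1 - α) / (2 * α) := by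
      rw [hd]; field_simp; ring
    have e1' : -(1/2) + d = (1 - α) / (2 * α) := by
      rw [hd]; field_simp; ring
    have eτ : (d + d) * α = 1 := by
      rw [hd]; field_simp; norm_num
    have hMh : (mpow σ ((1 - α) / (2 * α)) * ρ * mpow σ ((1 - α) / (2 * α))).PosSemidef := by
      have := hρ.mul_mul_conjTranspose_same (mpow σ ((1 - α) / (2 * α)))
      rwa [hmh] at this
    set B : Matrix n n ℂ := mpow σ d * mpow X (1/2) with hB
    have hBBh : B * Bᴴ = mpow σ ((1 - α) / (2 * α)) * ρ * mpow σ ((1 - α) / (2 * α)) := by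
      rw [hB, Matrix.conjTranspose_mul, hX12h, hmh]
      have h1 : mpow σ d * mpow X (1/2) * (mpow X (1/2) * mpow σ d)
          = mpow σ d * X * mpow σ d := by
        conv_rhs => rw [← hX12sq]
        simp only [mul_assoc]
      rw [h1, hXdef]
      calc mpow σ d * (mpow σ (-(1/2)) * ρ * mpow σ (-(1/2))) * mpow σ d
          = (mpow σ d * mpow σ (-(1/2))) * ρ * (mpow σ (-(1/2)) * mpow σ d) := by
            simp only [← mul_assoc]
        _ = mpow σ ((1 - α) / (2 * α)) * ρ * mpow σ ((1 - α) / (2 * α)) := by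
            rw [mpow_mul_mpow hσ, mpow_mul_mpow hσ, e1, e1']
    have hYdef : Bᴴ * B = mpow X (1/2) * mpow σ (d + d) * mpow X (1/2) := by
      rw [hB, Matrix.conjTranspose_mul, hX12h, hmh]
      calc mpow X (1/2) * mpow σ d * (mpow σ d * mpow X (1/2))
          = mpow X (1/2) * (mpow σ d * mpow σ d) * mpow X (1/2) := by
            simp only [← mul_assoc]
        _ = mpow X (1/2) * mpow σ (d + d) * mpow X (1/2) := by
            rw [mpow_mul_mpow hσ]
    have hYpsd : (mpow X (1/2) * mpow σ (d+d) * mpow X (1/2)).PosSemidef := by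
      have := (mpow_posSemidef hσ (d+d)).conjTranspose_mul_mul_same (mpow X (1/2))
      rwa [hX12h] at this
    set Λ : ℝ := ⨆ i, hMh.1.eigenvalues i with hΛ
    have hswap : Λ = ⨆ i, hYpsd.1.eigenvalues i := by
      calc Λ = ⨆ i, (posSemidef_self_mul_conjTranspose B).1.eigenvalues i :=
            (lmax_congr hBBh (posSemidef_self_mul_conjTranspose B).1 hMh.1).symm
        _ = ⨆ i, (posSemidef_conjTranspose_mul_self B).1.eigenvalues i := (lmax_swap B).symm
        _ = ⨆ i, hYpsd.1.eigenvalues i := lmax_congr hYdef _ hYpsd.1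
    have hGlo : ((mpow X (1/2) * mpow σ (d+d) * mpow X (1/2))
        - ((smin ^ (d+d) : ℝ) : ℂ) • X).PosSemidef := by
      have hG : (mpow σ (d+d) - ((smin ^ (d+d) : ℝ) : ℂ) • mpow σ 0).PosSemidef := by
        rw [mpow_rep hσ.1 (d+d), mpow_rep hσ.1 0, rep_sub_smul]
        apply rep_posSemidef
        intro i
        unfold fp
        by_cases h : hσ.1.eigenvalues i = 0
        · rw [if_pos h, if_pos h]; simp
        · rw [if_neg h, if_neg h, Real.rpow_zero, mul_one, sub_nonneg]
          exact Real.rpow_le_rpow hsmin_pos.le (hbound i h).1 hdd_pos.le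
      have hconj := hG.conjTranspose_mul_mul_same (mpow X (1/2))
      rw [hX12h] at hconj
      have heq : mpow X (1/2) * (mpow σ (d+d) - ((smin ^ (d+d):ℝ):ℂ) • mpow σ 0) * mpow X (1/2)
          = mpow X (1/2) * mpow σ (d+d) * mpow X (1/2) - ((smin ^ (d+d):ℝ):ℂ) • X := by
        rw [mul_sub, sub_mul]
        congr 1
        rw [mul_smul_comm, smul_mul_assoc, hX12PX12]
      rwa [heq] at hconj
    have hGhi : (((smax ^ (d+d) : ℝ) : ℂ) • X
        - mpow X (1/2) * mpow σ (d+d) * mpow X (1/2)).PosSemidef := by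
      have hG : (((smax ^ (d+d) : ℝ) : ℂ) • mpow σ 0 - mpow σ (d+d)).PosSemidef := by
        rw [mpow_rep hσ.1 (d+d), mpow_rep hσ.1 0, rep_smul_sub]
        apply rep_posSemidef
        intro i
        unfold fp
        by_cases h : hσ.1.eigenvalues i = 0
        · rw [if_pos h, if_pos h]; simp
        · rw [if_neg h, if_neg h, Real.rpow_zero, mul_one, sub_nonneg]
          exact Real.rpow_le_rpow (hσ.eigenvalues_nonneg i) (hbound i h).2 hdd_pos.le
      have hconj := hG.conjTranspose_mul_mul_same (mpow X (1/2))
      rw [hX12h] at hconj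
      have heq : mpow X (1/2) * (((smax ^ (d+d):ℝ):ℂ) • mpow σ 0 - mpow σ (d+d)) * mpow X (1/2)
          = ((smax ^ (d+d):ℝ):ℂ) • X - mpow X (1/2) * mpow σ (d+d) * mpow X (1/2) := by
        rw [mul_sub, sub_mul]
        congr 1
        rw [mul_smul_comm, smul_mul_assoc, hX12PX12]
      rwa [heq] at hconj
    have hτlo : smin ^ (d+d) * lam ≤ Λ := by
      rw [hswap]
      exact smul_le_lmax hYpsd.1 hXpsd.1 hGlo
    have hτhi : Λ ≤ smax ^ (d+d) * lam := by
      rw [hswap]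
      exact lmax_le_smul hYpsd.1 hXpsd.1 (Real.rpow_nonneg hsmax_pos.le _) hGhi
    have hΛpos : 0 < Λ :=
      lt_of_lt_of_le (mul_pos (Real.rpow_pos_of_pos hsmin_pos _) hlam_pos) hτlo
    have htr : (Matrix.trace (mpow (mpow σ ((1 - α) / (2 * α)) * ρ *
        mpow σ ((1 - α) / (2 * α))) α)).re = ∑ i, fp hMh.1 α i := trace_mpow_re hMh.1 α
    have hpow : ∀ s : ℝ, 0 < s → (s ^ (d+d)) ^ α = s := by
      intro s hs
      rw [← Real.rpow_mul hs.le, eτ, Real.rpow_one]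
    have hprod_lo : (smin ^ (d+d) * lam) ^ α = smin * lam ^ α := by
      rw [Real.mul_rpow (Real.rpow_nonneg hsmin_pos.le _) hlam_nonneg, hpow smin hsmin_pos]
    have hprod_hi : (smax ^ (d+d) * lam) ^ α = smax * lam ^ α := by
      rw [Real.mul_rpow (Real.rpow_nonneg hsmax_pos.le _) hlam_nonneg, hpow smax hsmax_pos]
    have hF_up : ∑ i, fp hMh.1 α i ≤ (Fintype.card n : ℝ) * (smax ^ (d+d) * lam) ^ α := by
      have h1 : ∀ i, fp hMh.1 α i ≤ (smax ^ (d+d) * lam) ^ α := by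
        intro i
        unfold fp
        by_cases h : hMh.1.eigenvalues i = 0
        · rw [if_pos h]
          exact Real.rpow_nonneg (by positivity) α
        · rw [if_neg h]
          apply Real.rpow_le_rpow (hMh.eigenvalues_nonneg i) _ hα0.le
          exact le_trans (le_fin_sup _ i) hτhi
      calc ∑ i, fp hMh.1 α i ≤ ∑ _i : n, (smax ^ (d+d) * lam) ^ α :=
            Finset.sum_le_sum (fun i _ => h1 i)
        _ = (Fintype.card n : ℝ) * (smax ^ (d+d) * lam) ^ α := by
            rw [Finset.sum_const, nsmul_eq_mul, Finset.card_univ]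
    have hF_lo : (smin ^ (d+d) * lam) ^ α ≤ ∑ i, fp hMh.1 α i := by
      obtain ⟨i0, hi0, hmax0⟩ := fin_sup_exists hMh.1.eigenvalues
      have hi0Λ : hMh.1.eigenvalues i0 = Λ := by rw [hΛ, hi0]
      have hi0ne : hMh.1.eigenvalues i0 ≠ 0 := by rw [hi0Λ]; exact ne_of_gt hΛpos
      have hterm : (smin ^ (d+d) * lam) ^ α ≤ fp hMh.1 α i0 := by
        unfold fp
        rw [if_neg hi0ne, hi0Λ]
        exact Real.rpow_le_rpow (by positivity) hτlo hα0.le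
      refine le_trans hterm (Finset.single_le_sum (fun i _ => ?_) (Finset.mem_univ i0))
      unfold fp
      by_cases h : hMh.1.eigenvalues i = 0
      · rw [if_pos h]
      · rw [if_neg h]
        exact Real.rpow_nonneg (hMh.eigenvalues_nonneg i) α
    have hFpos : 0 < ∑ i, fp hMh.1 α i := by
      refine lt_of_lt_of_le ?_ hF_lo
      rw [hprod_lo]
      exact mul_pos hsmin_pos (Real.rpow_pos_of_pos hlam_pos α)
    have hlog_lo : Real.log smin + α * Real.log lam ≤ Real.log (∑ i, fp hMh.1 α i) := by
      have h := Real.log_le_log (by rw [hprod_lo]; exact mul_pos hsmin_pos (Real.rpow_pos_of_pos hlam_pos α)) hF_lo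
      rw [hprod_lo, Real.log_mul (ne_of_gt hsmin_pos)
        (ne_of_gt (Real.rpow_pos_of_pos hlam_pos α)), Real.log_rpow hlam_pos] at h
      exact h
    have hlog_hi : Real.log (∑ i, fp hMh.1 α i)
        ≤ Real.log ((Fintype.card n : ℝ) * smax) + α * Real.log lam := by
      have hcard_pos : (0:ℝ) < Fintype.card n := by
        exact_mod_cast Fintype.card_pos
      have h2 : (Fintype.card n : ℝ) * (smax ^ (d+d) * lam) ^ α
          = ((Fintype.card n : ℝ) * smax) * lam ^ α := by
        rw [hprod_hi]; ring
      have h := Real.log_le_log hFpos (le_of_le_of_eq hF_up h2)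
      rw [Real.log_mul (ne_of_gt (mul_pos hcard_pos hsmax_pos))
        (ne_of_gt (Real.rpow_pos_of_pos hlam_pos α)), Real.log_rpow hlam_pos] at h
      exact h
    have hinv : (0:ℝ) ≤ (α-1)⁻¹ := inv_nonneg.mpr (sub_nonneg.mpr hα.le)
    rw [htr]
    exact ⟨mul_le_mul_of_nonneg_left hlog_lo hinv, mul_le_mul_of_nonneg_left hlog_hi hinv⟩
  exact tendsto_of_tendsto_of_tendsto_of_le_of_le' (key (Real.log smin))
    (key (Real.log ((Fintype.card n : ℝ) * smax)))
    (hev.mono fun α h => h.1) (hev.mono fun α h => h.2)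
end

section
/- Let ρ be a density matrix, σ positive semidefinite with supp(ρ) ⊆ supp(σ), and N(X) = Tr_E(U X U†) a channel via isometry U. For any unitary V commuting with N(σ), ‖(N(ρ)^{1/2} V N(σ)^{−1/2} ⊗ I_E) U σ^{1/2}‖₂² = 1. -/
open Matrix
open scoped Kronecker ComplexOrder

set_option linter.unusedSectionVars false

section MpowAux

variable {n : Type*} [Fintype n] [DecidableEq n]

private lemma mpow_def {A : Matrix n n ℂ} (h : A.IsHermitian) (r : ℝ) :
    mpow A r = (h.eigenvectorUnitary : Matrix n n ℂ) *
      Matrix.diagonal (fun i => (Complex.ofReal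
        (if h.eigenvalues i = 0 then (0:ℝ) else h.eigenvalues i ^ r))) *
      (star h.eigenvectorUnitary : Matrix n n ℂ) := dif_pos h

private lemma mpow_one_herm {A : Matrix n n ℂ} (h : A.IsHermitian) : mpow A 1 = A := by
  have hd : (fun i => (Complex.ofReal
      (if h.eigenvalues i = 0 then (0:ℝ) else h.eigenvalues i ^ (1:ℝ))))
      = Complex.ofReal ∘ h.eigenvalues := by
    funext i; by_cases hi : h.eigenvalues i = 0 <;> simp [hi]
  rw [mpow_def h, hd]
  exact h.spectral_theorem.symm

private lemma mpow_mul_mpow {A : Matrix n n ℂ} (hA : A.PosSemidef) (r s : ℝ) :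
    mpow A r * mpow A s = mpow A (r + s) := by
  have h := hA.1
  have h1 : (star h.eigenvectorUnitary : Matrix n n ℂ) * (h.eigenvectorUnitary : Matrix n n ℂ) = 1 :=
    Matrix.mem_unitaryGroup_iff'.mp h.eigenvectorUnitary.2
  rw [mpow_def h r, mpow_def h s, mpow_def h (r + s)]
  set W : Matrix n n ℂ := (h.eigenvectorUnitary : Matrix n n ℂ) with hW
  have e1 : W * Matrix.diagonal (fun i => (Complex.ofReal
        (if h.eigenvalues i = 0 then (0:ℝ) else h.eigenvalues i ^ r))) * star W *
      (W * Matrix.diagonal (fun i => (Complex.ofReal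
        (if h.eigenvalues i = 0 then (0:ℝ) else h.eigenvalues i ^ s))) * star W)
      = W * (Matrix.diagonal (fun i => (Complex.ofReal
        (if h.eigenvalues i = 0 then (0:ℝ) else h.eigenvalues i ^ r))) *
        Matrix.diagonal (fun i => (Complex.ofReal
        (if h.eigenvalues i = 0 then (0:ℝ) else h.eigenvalues i ^ s)))) * star W := by
    simp only [mul_assoc]
    rw [← mul_assoc (star W) W, h1, one_mul]
  rw [e1, Matrix.diagonal_mul_diagonal]
  have hd : (fun i => (Complex.ofReal
        (if h.eigenvalues i = 0 then (0:ℝ) else h.eigenvalues i ^ r)) *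
        (Complex.ofReal (if h.eigenvalues i = 0 then (0:ℝ) else h.eigenvalues i ^ s)))
      = (fun i => (Complex.ofReal
        (if h.eigenvalues i = 0 then (0:ℝ) else h.eigenvalues i ^ (r + s)))) := by
    funext i
    by_cases hi : h.eigenvalues i = 0
    · simp [hi]
    · have hpos : 0 < h.eigenvalues i := lt_of_le_of_ne (hA.eigenvalues_nonneg i) (Ne.symm hi)
      simp only [hi, if_false, ← Complex.ofReal_mul, ← Real.rpow_add hpos]
  rw [hd]

private lemma mpow_conjTranspose {A : Matrix n n ℂ} (h : A.IsHermitian) (r : ℝ) :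
    (mpow A r)ᴴ = mpow A r := by
  rw [mpow_def h r]
  simp only [Matrix.star_eq_conjTranspose, Matrix.conjTranspose_mul,
    Matrix.conjTranspose_conjTranspose, Matrix.diagonal_conjTranspose, Pi.star_def,
    Complex.star_def, Complex.conj_ofReal, mul_assoc]

private lemma commute_diagonal_of {C : Matrix n n ℂ} {lam : n → ℝ} (g : ℝ → ℂ)
    (hcd : C * Matrix.diagonal (fun i => (lam i : ℂ))
      = Matrix.diagonal (fun i => (lam i : ℂ)) * C) :
    C * Matrix.diagonal (fun i => g (lam i)) = Matrix.diagonal (fun i => g (lam i)) * C := by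
  ext i j
  have h1 := congrFun (congrFun hcd i) j
  simp only [Matrix.mul_diagonal, Matrix.diagonal_mul] at h1 ⊢
  by_cases hC : C i j = 0
  · simp [hC]
  · have hlam : lam j = lam i := by
      have : C i j * (lam j : ℂ) = C i j * (lam i : ℂ) := by rw [h1]; ring
      exact_mod_cast mul_left_cancel₀ hC this
    rw [hlam]; ring

private lemma commute_mpow_aux {W X : Matrix n n ℂ} (h1 : star W * W = 1) (h2 : W * star W = 1)
    {lam : n → ℝ} (g : ℝ → ℂ)
    (hc : X * (W * Matrix.diagonal (fun i => (lam i : ℂ)) * star W)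
        = (W * Matrix.diagonal (fun i => (lam i : ℂ)) * star W) * X) :
    X * (W * Matrix.diagonal (fun i => g (lam i)) * star W)
      = (W * Matrix.diagonal (fun i => g (lam i)) * star W) * X := by
  have h1' : ∀ Y : Matrix n n ℂ, star W * (W * Y) = Y := fun Y => by
    rw [← mul_assoc, h1, one_mul]
  have h2' : ∀ Y : Matrix n n ℂ, W * (star W * Y) = Y := fun Y => by
    rw [← mul_assoc, h2, one_mul]
  have hCD : (star W * (X * W)) * Matrix.diagonal (fun i => (lam i : ℂ))
      = Matrix.diagonal (fun i => (lam i : ℂ)) * (star W * (X * W)) := by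
    have h3 := congrArg (fun M => star W * (M * W)) hc
    simpa only [mul_assoc, h1, h2, h1', h2', mul_one, one_mul] using h3
  have h4 := congrArg (fun M => W * (M * star W)) (commute_diagonal_of g hCD)
  simpa only [mul_assoc, h1, h2, h1', h2', mul_one, one_mul] using h4

private lemma commute_mpow {A X : Matrix n n ℂ} (h : A.IsHermitian)
    (hc : X * A = A * X) (r : ℝ) : X * mpow A r = mpow A r * X := by
  have h1 : (star h.eigenvectorUnitary : Matrix n n ℂ) * (h.eigenvectorUnitary : Matrix n n ℂ) = 1 :=
    Matrix.mem_unitaryGroup_iff'.mp h.eigenvectorUnitary.2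
  have h2 : (h.eigenvectorUnitary : Matrix n n ℂ) * (star h.eigenvectorUnitary : Matrix n n ℂ) = 1 :=
    Matrix.mem_unitaryGroup_iff.mp h.eigenvectorUnitary.2
  have hspec : A = (h.eigenvectorUnitary : Matrix n n ℂ) *
      Matrix.diagonal (fun i => (h.eigenvalues i : ℂ)) *
      (star h.eigenvectorUnitary : Matrix n n ℂ) := h.spectral_theorem
  rw [mpow_def h]
  exact commute_mpow_aux h1 h2 (fun x => Complex.ofReal (if x = 0 then (0:ℝ) else x ^ r))
    (by rw [← hspec]; exact hc)

/-- If `ker T ⊆ ker R` then `R` times the support projection of `T` is `R`. -/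
private lemma mul_mpow_zero {T R : Matrix n n ℂ} (hT : T.PosSemidef)
    (hker : ∀ v, T *ᵥ v = 0 → R *ᵥ v = 0) : R * mpow T 0 = R := by
  have hTP : T * mpow T 0 = T := by
    calc T * mpow T 0 = mpow T 1 * mpow T 0 := by rw [mpow_one_herm hT.1]
      _ = mpow T (1 + 0) := mpow_mul_mpow hT 1 0
      _ = T := by rw [add_zero, mpow_one_herm hT.1]
  have key : ∀ v, (R * mpow T 0) *ᵥ v = R *ᵥ v := by
    intro v
    have h6 : T *ᵥ (v - (mpow T 0) *ᵥ v) = 0 := by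
      rw [Matrix.mulVec_sub, Matrix.mulVec_mulVec, hTP, sub_self]
    have h7 := hker _ h6
    rw [Matrix.mulVec_sub, Matrix.mulVec_mulVec, sub_eq_zero] at h7
    exact h7.symm
  ext i j
  have h9 := congrFun (key (Pi.single j 1)) i
  simpa using h9

end MpowAux

section PtraceAux

variable {B E : Type*} [Fintype B] [DecidableEq B] [Fintype E] [DecidableEq E]

private def emb (w : B → ℂ) (e : E) : B × E → ℂ := fun p => if p.2 = e then w p.1 else 0

private lemma trace_ptraceE (M : Matrix (B × E) (B × E) ℂ) : (ptraceE M).trace = M.trace := by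
  simp [Matrix.trace, ptraceE, Fintype.sum_prod_type, Matrix.diag]

private lemma trace_kron_mul (X : Matrix B B ℂ) (M : Matrix (B × E) (B × E) ℂ) :
    Matrix.trace ((X ⊗ₖ (1 : Matrix E E ℂ)) * M) = Matrix.trace (X * ptraceE M) := by
  simp only [Matrix.trace, Matrix.diag, Matrix.mul_apply, ptraceE, Matrix.of_apply,
    Matrix.kroneckerMap_apply, Matrix.one_apply, Fintype.sum_prod_type,
    mul_ite, mul_one, mul_zero, ite_mul, zero_mul, Finset.sum_ite_eq, Finset.sum_ite_eq',
    Finset.mem_univ, if_true, Finset.mul_sum]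
  exact Finset.sum_congr rfl fun i _ => Finset.sum_comm

private lemma ptraceE_mulVec (M : Matrix (B × E) (B × E) ℂ) (w : B → ℂ) (i : B) :
    ((ptraceE M) *ᵥ w) i = ∑ e, (M *ᵥ emb w e) (i, e) := by
  simp only [Matrix.mulVec, dotProduct, ptraceE, Matrix.of_apply, emb,
    Fintype.sum_prod_type, mul_ite, mul_zero, Finset.sum_ite_eq, Finset.sum_ite_eq',
    Finset.mem_univ, if_true, Finset.sum_mul]
  exact Finset.sum_comm

private lemma ptraceE_quad (M : Matrix (B × E) (B × E) ℂ) (w : B → ℂ) :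
    star w ⬝ᵥ ((ptraceE M) *ᵥ w) = ∑ e, star (emb w e) ⬝ᵥ (M *ᵥ emb w e) := by
  have h1 : ∀ e, star (emb w e) ⬝ᵥ (M *ᵥ emb w e)
      = ∑ i, star (w i) * (M *ᵥ emb w e) (i, e) := by
    intro e
    simp only [dotProduct, Fintype.sum_prod_type, emb, Pi.star_apply, apply_ite, star_zero,
      ite_mul, zero_mul, Finset.sum_ite_eq, Finset.sum_ite_eq', Finset.mem_univ, if_true]
  calc star w ⬝ᵥ ((ptraceE M) *ᵥ w) = ∑ i, star (w i) * ∑ e, (M *ᵥ emb w e) (i, e) := by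
        simp only [dotProduct, Pi.star_apply, ptraceE_mulVec]
    _ = ∑ i, ∑ e, star (w i) * (M *ᵥ emb w e) (i, e) := by
        simp only [Finset.mul_sum]
    _ = ∑ e, ∑ i, star (w i) * (M *ᵥ emb w e) (i, e) := Finset.sum_comm
    _ = ∑ e, star (emb w e) ⬝ᵥ (M *ᵥ emb w e) :=
        Finset.sum_congr rfl fun e _ => (h1 e).symm

private lemma posSemidef_ptraceE {M : Matrix (B × E) (B × E) ℂ} (hM : M.PosSemidef) :
    (ptraceE M).PosSemidef := by
  refine Matrix.posSemidef_iff_dotProduct_mulVec.mpr ⟨?_, ?_⟩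
  · have key : ∀ (i j : B) (e : E), star (M (j,e) (i,e)) = M (i,e) (j,e) := by
      intro i j e
      have h := congrFun (congrFun hM.1 (i,e)) (j,e)
      simpa [Matrix.conjTranspose_apply] using h
    show (ptraceE M)ᴴ = ptraceE M
    ext i j
    simp only [Matrix.conjTranspose_apply, ptraceE, Matrix.of_apply, star_sum]
    exact Finset.sum_congr rfl fun e _ => key i j e
  · intro x
    rw [ptraceE_quad]
    exact Finset.sum_nonneg fun e _ => hM.dotProduct_mulVec_nonneg _

private lemma ker_ptraceE {M : Matrix (B × E) (B × E) ℂ} (hM : M.PosSemidef) {w : B → ℂ}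
    (hw : (ptraceE M) *ᵥ w = 0) (e : E) : M *ᵥ emb w e = 0 := by
  have h0 : ∑ e, star (emb w e) ⬝ᵥ (M *ᵥ emb w e) = 0 := by
    rw [← ptraceE_quad, hw, dotProduct_zero]
  have h1 := (Finset.sum_eq_zero_iff_of_nonneg
    (fun e _ => hM.dotProduct_mulVec_nonneg (emb w e))).mp h0 e (Finset.mem_univ e)
  exact (hM.dotProduct_mulVec_zero_iff (emb w e)).mp h1

private lemma kron_one_conjTranspose (X : Matrix B B ℂ) :
    (X ⊗ₖ (1 : Matrix E E ℂ))ᴴ = (Xᴴ ⊗ₖ (1 : Matrix E E ℂ)) := by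
  ext ⟨i, e⟩ ⟨j, f⟩
  by_cases h : e = f
  · subst h
    simp [Matrix.conjTranspose_apply, Matrix.kroneckerMap_apply, Matrix.one_apply]
  · simp [Matrix.conjTranspose_apply, Matrix.kroneckerMap_apply, Matrix.one_apply, h, Ne.symm h]

end PtraceAux

/-- for any unitary `V` commuting with `N(σ)`,
`‖(N(ρ)^{1/2} V N(σ)^{-1/2} ⊗ I_E) U σ^{1/2}‖₂² = 1`, where `N(X) = Tr_E (U X Uᴴ)`. -/
theorem stmt_16 {n B E : Type*} [Fintype n] [DecidableEq n] [Fintype B] [DecidableEq B]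
    [Fintype E] [DecidableEq E]
    (ρ σ : Matrix n n ℂ) (hρ : ρ.PosSemidef) (hρ1 : ρ.trace = 1) (hσ : σ.PosSemidef)
    (hsupp : ∀ v, σ.mulVec v = 0 → ρ.mulVec v = 0)
    (U : Matrix (B × E) n ℂ) (hU : Uᴴ * U = 1)
    (V : Matrix B B ℂ) (hV : V ∈ Matrix.unitaryGroup B ℂ)
    (hVc : V * ptraceE (U * σ * Uᴴ) = ptraceE (U * σ * Uᴴ) * V) :
    (schattenNorm 2
        (((mpow (ptraceE (U * ρ * Uᴴ)) (1 / 2) * V *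
            mpow (ptraceE (U * σ * Uᴴ)) (-(1 / 2))) ⊗ₖ (1 : Matrix E E ℂ)) *
          U * mpow σ (1 / 2))) ^ 2 = 1 := by
  classical
  have hσc : (U * σ * Uᴴ).PosSemidef := hσ.mul_mul_conjTranspose_same U
  have hρc : (U * ρ * Uᴴ).PosSemidef := hρ.mul_mul_conjTranspose_same U
  set T := ptraceE (U * σ * Uᴴ) with hTdef
  set R := ptraceE (U * ρ * Uᴴ) with hRdef
  have hT : T.PosSemidef := posSemidef_ptraceE hσc
  have hR : R.PosSemidef := posSemidef_ptraceE hρc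
  -- kernel inclusion `ker T ⊆ ker R`
  have hker : ∀ w, T *ᵥ w = 0 → R *ᵥ w = 0 := by
    intro w hw
    have hz2 : ∀ e : E, (U * ρ * Uᴴ) *ᵥ emb w e = 0 := by
      intro e
      have hz : (U * σ * Uᴴ) *ᵥ emb w e = 0 := ker_ptraceE hσc hw e
      have h5 : U *ᵥ (σ *ᵥ (Uᴴ *ᵥ emb w e)) = 0 := by
        rw [Matrix.mulVec_mulVec, Matrix.mulVec_mulVec]; exact hz
      have h7 := congrArg (fun v => Uᴴ *ᵥ v) h5
      simp only [Matrix.mulVec_mulVec, Matrix.mulVec_zero] at h7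
      rw [← Matrix.mul_assoc, hU, Matrix.one_mul, ← Matrix.mulVec_mulVec] at h7
      have h8 := hsupp _ h7
      show (U * ρ * Uᴴ) *ᵥ emb w e = 0
      rw [← Matrix.mulVec_mulVec, ← Matrix.mulVec_mulVec, h8, Matrix.mulVec_zero]
    funext i
    rw [hRdef, ptraceE_mulVec]
    simp only [hz2, Pi.zero_apply, Finset.sum_const_zero]
  have hRP : R * mpow T 0 = R := mul_mpow_zero hT hker
  have hVP : V * mpow T 0 = mpow T 0 * V := commute_mpow hT.1 hVc 0
  have hVV : V * Vᴴ = 1 := by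
    have h := Matrix.mem_unitaryGroup_iff.mp hV
    rwa [Matrix.star_eq_conjTranspose] at h
  set s := mpow σ (1 / 2 : ℝ) with hs
  set t := mpow T (-(1 / 2) : ℝ) with ht
  set r := mpow R (1 / 2 : ℝ) with hr
  have hsH : sᴴ = s := by rw [hs]; exact mpow_conjTranspose hσ.1 _
  have htH : tᴴ = t := by rw [ht]; exact mpow_conjTranspose hT.1 _
  have hrH : rᴴ = r := by rw [hr]; exact mpow_conjTranspose hR.1 _
  have hss : s * s = σ := by
    rw [hs, mpow_mul_mpow hσ, show ((1:ℝ)/2 + 1/2 : ℝ) = 1 by norm_num, mpow_one_herm hσ.1]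
  have hrr : r * r = R := by
    rw [hr, mpow_mul_mpow hR, show ((1:ℝ)/2 + 1/2 : ℝ) = 1 by norm_num, mpow_one_herm hR.1]
  have e1 : T * mpow T (-(1/2) : ℝ) = mpow T (1 + -(1/2)) := by
    calc T * mpow T (-(1/2) : ℝ) = mpow T 1 * mpow T (-(1/2)) := by rw [mpow_one_herm hT.1]
      _ = mpow T (1 + -(1/2)) := mpow_mul_mpow hT 1 _
  have htTt : t * (T * t) = mpow T 0 := by
    rw [ht, e1, mpow_mul_mpow hT, show (-(1/2) + (1 + -(1/2)) : ℝ) = 0 by norm_num]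
  set M : Matrix (B × E) n ℂ := ((r * V * t) ⊗ₖ (1 : Matrix E E ℂ)) * U * s with hM
  have hMH : Mᴴ = s * (Uᴴ * ((t * (Vᴴ * r)) ⊗ₖ (1 : Matrix E E ℂ))) := by
    rw [hM]
    simp only [Matrix.conjTranspose_mul, kron_one_conjTranspose, hsH, htH, hrH, mul_assoc]
  have hG : (t * (Vᴴ * r)) * (r * (V * t)) = t * (Vᴴ * (R * (V * t))) := by
    rw [← hrr]; simp only [Matrix.mul_assoc]
  have key : Matrix.trace (Mᴴ * M) = 1 := by
    calc Matrix.trace (Mᴴ * M)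
        = Matrix.trace (s * (Uᴴ * (((t * (Vᴴ * r)) ⊗ₖ (1 : Matrix E E ℂ)) *
            (((r * (V * t)) ⊗ₖ (1 : Matrix E E ℂ)) * (U * s))))) := by
          rw [hMH, hM]; simp only [Matrix.mul_assoc]
      _ = Matrix.trace ((Uᴴ * (((t * (Vᴴ * r)) ⊗ₖ (1 : Matrix E E ℂ)) *
            (((r * (V * t)) ⊗ₖ (1 : Matrix E E ℂ)) * (U * s)))) * s) :=
          Matrix.trace_mul_comm _ _
      _ = Matrix.trace (Uᴴ * (((t * (Vᴴ * r)) ⊗ₖ (1 : Matrix E E ℂ)) *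
            (((r * (V * t)) ⊗ₖ (1 : Matrix E E ℂ)) * (U * (s * s))))) := by
          simp only [Matrix.mul_assoc]
      _ = Matrix.trace (Uᴴ * (((t * (Vᴴ * r)) ⊗ₖ (1 : Matrix E E ℂ)) *
            (((r * (V * t)) ⊗ₖ (1 : Matrix E E ℂ)) * (U * σ)))) := by rw [hss]
      _ = Matrix.trace ((((t * (Vᴴ * r)) ⊗ₖ (1 : Matrix E E ℂ)) *
            (((r * (V * t)) ⊗ₖ (1 : Matrix E E ℂ)) * (U * σ))) * Uᴴ) :=
          Matrix.trace_mul_comm _ _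
      _ = Matrix.trace ((((t * (Vᴴ * r)) ⊗ₖ (1 : Matrix E E ℂ)) *
            ((r * (V * t)) ⊗ₖ (1 : Matrix E E ℂ))) * (U * σ * Uᴴ)) := by
          simp only [Matrix.mul_assoc]
      _ = Matrix.trace ((((t * (Vᴴ * r)) * (r * (V * t))) ⊗ₖ ((1 : Matrix E E ℂ) * 1)) *
            (U * σ * Uᴴ)) := by rw [Matrix.mul_kronecker_mul]
      _ = Matrix.trace ((((t * (Vᴴ * r)) * (r * (V * t))) ⊗ₖ (1 : Matrix E E ℂ)) *
            (U * σ * Uᴴ)) := by rw [Matrix.one_mul]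
      _ = Matrix.trace (((t * (Vᴴ * r)) * (r * (V * t))) * T) := by
          rw [trace_kron_mul, hTdef]
      _ = Matrix.trace ((t * (Vᴴ * (R * (V * t)))) * T) := by rw [hG]
      _ = Matrix.trace (t * ((Vᴴ * (R * (V * t))) * T)) := by simp only [Matrix.mul_assoc]
      _ = Matrix.trace (((Vᴴ * (R * (V * t))) * T) * t) := Matrix.trace_mul_comm _ _
      _ = Matrix.trace (Vᴴ * (R * (V * (t * (T * t))))) := by simp only [Matrix.mul_assoc]
      _ = Matrix.trace (Vᴴ * (R * (V * mpow T 0))) := by rw [htTt]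
      _ = Matrix.trace (Vᴴ * (R * (mpow T 0 * V))) := by rw [hVP]
      _ = Matrix.trace (V * (Vᴴ * (R * mpow T 0))) := by
          rw [Matrix.trace_mul_comm V (Vᴴ * (R * mpow T 0))]
          simp only [Matrix.mul_assoc]
      _ = Matrix.trace ((V * Vᴴ) * (R * mpow T 0)) := by
          rw [← Matrix.mul_assoc V Vᴴ (R * mpow T 0)]
      _ = Matrix.trace (R * mpow T 0) := by rw [hVV, Matrix.one_mul]
      _ = Matrix.trace R := by rw [hRP]
      _ = Matrix.trace (U * ρ * Uᴴ) := by rw [hRdef, trace_ptraceE]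
      _ = 1 := by
          rw [Matrix.trace_mul_comm (U * ρ) Uᴴ, ← Matrix.mul_assoc, hU, Matrix.one_mul, hρ1]
  show (schattenNorm 2 M) ^ 2 = 1
  unfold schattenNorm
  rw [show ((2:ℝ) / 2) = 1 by norm_num, mpow_one_herm (Matrix.isHermitian_conjTranspose_mul_self M),
    key]
  norm_num
end
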